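/- arXiv:1905.04285 — 4 statements merged into one kernel-verified Lean document; each statement's English description precedes it below -/
import Mathlib

section
/- Let V be a vector space with basis {v_x : x ∈ X} indexed by a rack (X,▷), and let q : X × X → k^× be a 2-cocycle, i.e. q_{x, y▷z} q_{y,z} = q_{x▷y, x▷z} q_{x,z} for all x,y,z ∈ X. Then the linear map c : V ⊗ V → V ⊗ V defined by c(v_x ⊗ v_y) = q_{x,y} v_{x▷y} ⊗ v_x satisfies the braid equation (c⊗id)(id⊗c)(c⊗id) = (id⊗c)(c⊗id)(id⊗c). -/
/-- `c ⊗ id` on `V ⊗ V ⊗ V` for the rack braiding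
`c(v_x ⊗ v_y) = q x y • v_{x ▷ y} ⊗ v_x`, where `V ⊗ V ⊗ V` is identified with
`(X × X × X) →₀ k`. -/
noncomputable def braidOuter (k : Type*) [Field k] {X : Type*}
    (q : X → X → k) (op : X → X → X) :
    ((X × X × X) →₀ k) →ₗ[k] ((X × X × X) →₀ k) :=
  Finsupp.lsum k fun t =>
    LinearMap.toSpanSingleton k ((X × X × X) →₀ k)
      (q t.1 t.2.1 • Finsupp.single (op t.1 t.2.1, t.1, t.2.2) (1 : k))

/-- `id ⊗ c` on `V ⊗ V ⊗ V`. -/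
noncomputable def braidInner (k : Type*) [Field k] {X : Type*}
    (q : X → X → k) (op : X → X → X) :
    ((X × X × X) →₀ k) →ₗ[k] ((X × X × X) →₀ k) :=
  Finsupp.lsum k fun t =>
    LinearMap.toSpanSingleton k ((X × X × X) →₀ k)
      (q t.2.1 t.2.2 • Finsupp.single (t.1, op t.2.1 t.2.2, t.2.1) (1 : k))

/-- for a rack `(X, ▷)` and a 2-cocycle `q : X × X → kˣ`, the map
`c(v_x ⊗ v_y) = q_{x,y} v_{x▷y} ⊗ v_x` on the free vector space on `X`
satisfies the braid equation `(c⊗id)(id⊗c)(c⊗id) = (id⊗c)(c⊗id)(id⊗c)`. -/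
theorem rack_cocycle_braiding {k : Type*} [Field k] {X : Type*}
    (q : X → X → k) (op : X → X → X)
    (hsd : ∀ x y z : X, op x (op y z) = op (op x y) (op x z))
    (hbij : ∀ x : X, Function.Bijective (op x))
    (hq : ∀ x y : X, q x y ≠ 0)
    (hcoc : ∀ x y z : X, q x (op y z) * q y z = q (op x y) (op x z) * q x z) :
    (braidOuter k q op) ∘ₗ (braidInner k q op) ∘ₗ (braidOuter k q op)
      = (braidInner k q op) ∘ₗ (braidOuter k q op) ∘ₗ (braidInner k q op) := by
  apply Finsupp.lhom_ext
  rintro ⟨x, y, z⟩ a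
  simp only [LinearMap.comp_apply, braidOuter, braidInner, Finsupp.lsum_single,
    LinearMap.toSpanSingleton_apply, map_smul, Finsupp.smul_single, smul_eq_mul, mul_one]
  rw [← hsd]
  congr 1
  linear_combination (-(a * q x y)) * (hcoc x y z)
end

section
/- Let A be the associative k-algebra (char k = 0) presented by generators x₁, x₂, x₃ and relations x_i² = 0 (i=1,2,3), x₁x₂ + x₃x₁ + x₂x₃ = 0 and x₂x₁ + x₁x₃ + x₃x₂ = 0 (the Fomin–Kirillov algebra FK₃). Then dim_k A = 12, and the 12 monomials x₁^{n₁} x₂^{n₂} x₃^{n₃} (n_i ∈ {0,1}) together with x₁^{n₁} x₂x₁ x₃^{n₃} (n₁,n₃ ∈ {0,1}) form a basis of A. -/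
def Xmat0 : Matrix (Fin 12) (Fin 12) ℤ := Matrix.of
  ![![0,0,0,0,0,0,0,0,0,0,0,0],
   ![1,0,0,0,0,0,0,0,0,0,0,0],
   ![0,0,0,0,0,0,0,0,0,0,0,0],
   ![0,0,0,0,0,0,0,0,0,0,0,0],
   ![0,0,1,0,0,0,0,0,0,0,0,0],
   ![0,0,0,1,0,0,0,0,0,0,0,0],
   ![0,0,0,0,0,0,0,0,0,0,0,0],
   ![0,0,0,0,0,0,1,0,0,0,0,0],
   ![0,0,0,0,0,0,0,0,0,0,0,0],
   ![0,0,0,0,0,0,0,0,0,0,0,0],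
   ![0,0,0,0,0,0,0,0,1,0,0,0],
   ![0,0,0,0,0,0,0,0,0,1,0,0]]

def Xmat1 : Matrix (Fin 12) (Fin 12) ℤ := Matrix.of
  ![![0,0,0,0,0,0,0,0,0,0,0,0],
   ![0,0,0,0,0,0,0,0,0,0,0,0],
   ![1,0,0,0,0,0,0,0,0,0,0,0],
   ![0,0,0,0,0,0,0,0,0,0,0,0],
   ![0,0,0,0,0,0,0,0,0,0,0,0],
   ![0,0,0,0,0,0,0,0,0,0,0,0],
   ![0,0,0,1,0,0,0,0,0,0,0,0],
   ![0,0,0,0,0,0,0,0,0,0,0,0],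
   ![0,1,0,0,0,0,0,0,0,0,0,0],
   ![0,0,0,0,0,1,0,0,0,0,0,0],
   ![0,0,0,0,1,0,0,0,0,0,0,0],
   ![0,0,0,0,0,0,0,1,0,0,0,0]]

def Xmat2 : Matrix (Fin 12) (Fin 12) ℤ := Matrix.of
  ![![0,0,0,0,0,0,0,0,0,0,0,0],
   ![0,0,0,0,0,0,0,0,0,0,0,0],
   ![0,0,0,0,0,0,0,0,0,0,0,0],
   ![1,0,0,0,0,0,0,0,0,0,0,0],
   ![0,-1,0,0,0,0,0,0,0,0,0,0],
   ![0,0,-1,0,0,0,0,0,0,0,0,0],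
   ![0,-1,0,0,0,0,0,0,0,0,0,0],
   ![0,0,0,0,0,-1,0,0,1,0,0,0],
   ![0,0,-1,0,0,0,0,0,0,0,0,0],
   ![0,0,0,0,1,0,-1,0,0,0,0,0],
   ![0,0,0,0,0,0,0,0,0,0,0,0],
   ![0,0,0,0,0,0,0,0,0,0,-1,0]]

/-- The three matrices of the left regular representation of FK₃. -/
def XM : Fin 3 → Matrix (Fin 12) (Fin 12) ℤ := ![Xmat0, Xmat1, Xmat2]

/-- Index of each basis monomial in `Fin 12`. -/
def widx : (Fin 2 × Fin 2 × Fin 2) ⊕ (Fin 2 × Fin 2) → Fin 12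
  | .inl (0,0,0) => 0
  | .inl (0,0,1) => 3
  | .inl (0,1,0) => 2
  | .inl (0,1,1) => 6
  | .inl (1,0,0) => 1
  | .inl (1,0,1) => 5
  | .inl (1,1,0) => 4
  | .inl (1,1,1) => 7
  | .inr (0,0) => 8
  | .inr (0,1) => 9
  | .inr (1,0) => 10
  | .inr (1,1) => 11

/-- Matrix of each basis monomial. -/
def wmat : (Fin 2 × Fin 2 × Fin 2) ⊕ (Fin 2 × Fin 2) → Matrix (Fin 12) (Fin 12) ℤ
  | .inl p => Xmat0 ^ (p.1 : ℕ) * Xmat1 ^ (p.2.1 : ℕ) * Xmat2 ^ (p.2.2 : ℕ)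
  | .inr p => Xmat0 ^ (p.1 : ℕ) * (Xmat1 * Xmat0) * Xmat2 ^ (p.2 : ℕ)

lemma XM_sq : ∀ i : Fin 3, XM i * XM i = 0 := by decide
lemma XM_r1 : XM 0 * XM 1 + XM 2 * XM 0 + XM 1 * XM 2 = 0 := by decide
lemma XM_r2 : XM 1 * XM 0 + XM 0 * XM 2 + XM 2 * XM 1 = 0 := by decide
lemma wmat_col : ∀ (i : (Fin 2 × Fin 2 × Fin 2) ⊕ (Fin 2 × Fin 2)) (j : Fin 12),
    wmat i j 0 = if j = widx i then 1 else 0 := by decide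
lemma widx_inj : Function.Injective widx := by decide


/-- Defining relations of the Fomin–Kirillov algebra FK₃. -/
inductive FKRel (k : Type*) [Field k] :
    FreeAlgebra k (Fin 3) → FreeAlgebra k (Fin 3) → Prop
  | sq (i : Fin 3) : FKRel k (FreeAlgebra.ι k i * FreeAlgebra.ι k i) 0
  | r1 : FKRel k
      (FreeAlgebra.ι k 0 * FreeAlgebra.ι k 1 + FreeAlgebra.ι k 2 * FreeAlgebra.ι k 0
        + FreeAlgebra.ι k 1 * FreeAlgebra.ι k 2) 0
  | r2 : FKRel k
      (FreeAlgebra.ι k 1 * FreeAlgebra.ι k 0 + FreeAlgebra.ι k 0 * FreeAlgebra.ι k 2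
        + FreeAlgebra.ι k 2 * FreeAlgebra.ι k 1) 0

/-- The Fomin–Kirillov algebra FK₃, presented by generators `x₁, x₂, x₃`
(indexed `0, 1, 2`) and relations `x_i² = 0`, `x₁x₂ + x₃x₁ + x₂x₃ = 0`,
`x₂x₁ + x₁x₃ + x₃x₂ = 0`. -/
abbrev FK3 (k : Type*) [Field k] := RingQuot (FKRel k)

/-- The generators of FK₃. -/
noncomputable def fkx (k : Type*) [Field k] (i : Fin 3) : FK3 k :=
  RingQuot.mkAlgHom k (FKRel k) (FreeAlgebra.ι k i)

section GenericRing

variable {R : Type*} [Ring R] {a b c : R}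

private lemma fkg_ca (h1 : a*b + c*a + b*c = 0) : c*a = -(a*b) - b*c := by
  rw [← sub_eq_zero, show c*a - (-(a*b) - b*c) = a*b + c*a + b*c by noncomm_ring]; exact h1

private lemma fkg_cb (h2 : b*a + a*c + c*b = 0) : c*b = -(b*a) - a*c := by
  rw [← sub_eq_zero, show c*b - (-(b*a) - a*c) = b*a + a*c + c*b by noncomm_ring]; exact h2

private lemma fkg_ba (h2 : b*a + a*c + c*b = 0) : b*a = -(a*c) - c*b := by
  rw [← sub_eq_zero, show b*a - (-(a*c) - c*b) = b*a + a*c + c*b by noncomm_ring]; exact h2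

private lemma fkg_sqt (ha : a*a = 0) (t : R) : a*(a*t) = 0 := by
  rw [← mul_assoc, ha, zero_mul]

private lemma fkg_cat (h1 : a*b + c*a + b*c = 0) (t : R) :
    c*(a*t) = -(a*(b*t)) - b*(c*t) := by
  rw [← mul_assoc, fkg_ca h1, sub_mul, neg_mul, mul_assoc, mul_assoc]

private lemma fkg_cbt (h2 : b*a + a*c + c*b = 0) (t : R) :
    c*(b*t) = -(b*(a*t)) - a*(c*t) := by
  rw [← mul_assoc, fkg_cb h2, sub_mul, neg_mul, mul_assoc, mul_assoc]

private lemma fkg_bab (ha : a*a = 0) (hb : b*b = 0) (h2 : b*a + a*c + c*b = 0) :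
    b*(a*b) = a*(b*a) := by
  have e : b*(a*b) = (-(a*c) - c*b)*b := by conv_lhs => rw [← mul_assoc, fkg_ba h2]
  rw [e, sub_mul, neg_mul, mul_assoc, mul_assoc, fkg_cb h2, hb, mul_zero, sub_zero, mul_sub,
    mul_neg, fkg_sqt ha, sub_zero, neg_neg]

private lemma fkg_babt (ha : a*a = 0) (hb : b*b = 0) (h2 : b*a + a*c + c*b = 0) (t : R) :
    b*(a*(b*t)) = a*(b*(a*t)) := by
  rw [show b*(a*(b*t)) = (b*(a*b))*t by rw [mul_assoc, mul_assoc], fkg_bab ha hb h2,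
    mul_assoc, mul_assoc]

variable (ha : a*a = 0) (hb : b*b = 0) (hc : c*c = 0)
  (h1 : a*b + c*a + b*c = 0) (h2 : b*a + a*c + c*b = 0)

include ha hb hc h1 h2

private lemma fkg_cab : c*(a*b) = b*(a*c) := by
  simp only [fkg_cat h1, fkg_cbt h2, fkg_sqt ha, fkg_sqt hb, fkg_sqt hc, ha, hb, hc, fkg_ca h1, fkg_cb h2,
    mul_neg, mul_sub, mul_add, mul_zero, neg_neg, neg_zero, sub_zero, zero_sub, add_zero,
    zero_add, sub_self, sub_neg_eq_add]

private lemma fkg_cac : c*(a*c) = -(a*(b*c)) := by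
  simp only [fkg_cat h1, fkg_cbt h2, fkg_sqt ha, fkg_sqt hb, fkg_sqt hc, ha, hb, hc, fkg_ca h1, fkg_cb h2,
    mul_neg, mul_sub, mul_add, mul_zero, neg_neg, neg_zero, sub_zero, zero_sub, add_zero,
    zero_add, sub_self, sub_neg_eq_add]

private lemma fkg_cbc : c*(b*c) = -(b*(a*c)) := by
  simp only [fkg_cat h1, fkg_cbt h2, fkg_sqt ha, fkg_sqt hb, fkg_sqt hc, ha, hb, hc, fkg_ca h1, fkg_cb h2,
    mul_neg, mul_sub, mul_add, mul_zero, neg_neg, neg_zero, sub_zero, zero_sub, add_zero,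
    zero_add, sub_self, sub_neg_eq_add]

private lemma fkg_cba : c*(b*a) = a*(b*c) := by
  simp only [fkg_cat h1, fkg_cbt h2, fkg_sqt ha, fkg_sqt hb, fkg_sqt hc, ha, hb, hc, fkg_ca h1, fkg_cb h2, fkg_ca h1,
    mul_neg, mul_sub, mul_add, mul_zero, neg_neg, neg_zero, sub_zero, zero_sub, add_zero,
    zero_add, sub_self, sub_neg_eq_add]

private lemma fkg_cabc : c*(a*(b*c)) = 0 := by
  simp only [fkg_cat h1, fkg_cbt h2, fkg_sqt ha, fkg_sqt hb, fkg_sqt hc, ha, hb, hc, fkg_ca h1, fkg_cb h2,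
    mul_neg, mul_sub, mul_add, mul_zero, neg_neg, neg_zero, sub_zero, zero_sub, add_zero,
    zero_add, sub_self, sub_neg_eq_add]

private lemma fkg_cbac : c*(b*(a*c)) = 0 := by
  simp only [fkg_cat h1, fkg_cbt h2, fkg_sqt ha, fkg_sqt hb, fkg_sqt hc, ha, hb, hc, fkg_ca h1, fkg_cb h2,
    mul_neg, mul_sub, mul_add, mul_zero, neg_neg, neg_zero, sub_zero, zero_sub, add_zero,
    zero_add, sub_self, sub_neg_eq_add]

private lemma fkg_caba : c*(a*(b*a)) = -(a*(b*(a*c))) := by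
  simp only [fkg_cat h1, fkg_cbt h2, fkg_babt ha hb h2, fkg_sqt ha, fkg_sqt hb, fkg_sqt hc,
    ha, hb, hc, fkg_ca h1, fkg_cb h2,
    mul_neg, mul_sub, mul_add, mul_zero, neg_neg, neg_zero, sub_zero, zero_sub, add_zero,
    zero_add, sub_self, sub_neg_eq_add]

private lemma fkg_cabac : c*(a*(b*(a*c))) = 0 := by
  simp only [fkg_cat h1, fkg_cbt h2, fkg_babt ha hb h2, fkg_sqt ha, fkg_sqt hb, fkg_sqt hc,
    ha, hb, hc, fkg_ca h1, fkg_cb h2,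
    mul_neg, mul_sub, mul_add, mul_zero, neg_neg, neg_zero, sub_zero, zero_sub, add_zero,
    zero_add, sub_self, sub_neg_eq_add]

private lemma fkg_baba : b*(a*(b*a)) = 0 := by
  rw [fkg_babt ha hb h2, ha, mul_zero, mul_zero]

private lemma fkg_babac : b*(a*(b*(a*c))) = 0 := by
  rw [fkg_babt ha hb h2, fkg_sqt ha, mul_zero, mul_zero]

private lemma fkg_babc : b*(a*(b*c)) = a*(b*(a*c)) := fkg_babt ha hb h2 c

end GenericRing
noncomputable section

variable (k : Type*) [Field k]

/-- Entrywise cast of integer matrices into matrices over `k`. -/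
def ψmat : Matrix (Fin 12) (Fin 12) ℤ →+* Matrix (Fin 12) (Fin 12) k :=
  (Int.castRingHom k).mapMatrix

/-- The lift of the regular representation to the free algebra. -/
def Frep : FreeAlgebra k (Fin 3) →ₐ[k] Matrix (Fin 12) (Fin 12) k :=
  FreeAlgebra.lift k fun i => ψmat k (XM i)

lemma Frep_rel : ∀ ⦃x y⦄, FKRel k x y → Frep k x = Frep k y := by
  intro x y h
  cases h with
  | sq i =>
      simp only [Frep, map_mul, map_zero, FreeAlgebra.lift_ι_apply]
      rw [← map_mul, XM_sq i, map_zero]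
  | r1 =>
      simp only [Frep, map_add, map_mul, map_zero, FreeAlgebra.lift_ι_apply]
      rw [← map_mul, ← map_mul, ← map_mul, ← map_add, ← map_add, XM_r1, map_zero]
  | r2 =>
      simp only [Frep, map_add, map_mul, map_zero, FreeAlgebra.lift_ι_apply]
      rw [← map_mul, ← map_mul, ← map_mul, ← map_add, ← map_add, XM_r2, map_zero]

/-- The regular representation of FK₃. -/
def φrep : FK3 k →ₐ[k] Matrix (Fin 12) (Fin 12) k :=
  RingQuot.liftAlgHom k ⟨Frep k, Frep_rel k⟩

lemma φrep_fkx (i : Fin 3) : φrep k (fkx k i) = ψmat k (XM i) := by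
  rw [fkx, φrep, RingQuot.liftAlgHom_mkAlgHom_apply, Frep, FreeAlgebra.lift_ι_apply]

/-- The linear map selecting column 0. -/
def Lcol : Matrix (Fin 12) (Fin 12) k →ₗ[k] (Fin 12 → k) where
  toFun M := fun j => M j 0
  map_add' M N := rfl
  map_smul' r M := rfl

/-- The basis monomial family in FK₃. -/
def fkMon : (Fin 2 × Fin 2 × Fin 2) ⊕ (Fin 2 × Fin 2) → FK3 k
  | .inl p => fkx k 0 ^ (p.1 : ℕ) * fkx k 1 ^ (p.2.1 : ℕ) * fkx k 2 ^ (p.2.2 : ℕ)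
  | .inr p => fkx k 0 ^ (p.1 : ℕ) * (fkx k 1 * fkx k 0) * fkx k 2 ^ (p.2 : ℕ)

lemma φrep_fkMon (i : (Fin 2 × Fin 2 × Fin 2) ⊕ (Fin 2 × Fin 2)) :
    φrep k (fkMon k i) = ψmat k (wmat i) := by
  have h0 := φrep_fkx k 0
  have h1 := φrep_fkx k 1
  have h2 := φrep_fkx k 2
  rcases i with ⟨n1, n2, n3⟩ | ⟨n1, n3⟩ <;>
    simp [fkMon, wmat, map_mul, map_pow, h0, h1, h2, XM]

lemma Lcol_φrep_fkMon (i : (Fin 2 × Fin 2 × Fin 2) ⊕ (Fin 2 × Fin 2)) :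
    Lcol k (φrep k (fkMon k i)) = Pi.basisFun k (Fin 12) (widx i) := by
  rw [φrep_fkMon]
  funext j
  simp only [Lcol, LinearMap.coe_mk, AddHom.coe_mk, ψmat, RingHom.mapMatrix_apply,
    Matrix.map_apply, Int.coe_castRingHom, Pi.basisFun_apply]
  change ((wmat i j 0 : ℤ) : k) = _
  rw [wmat_col i j]
  simp [Pi.single_apply]

lemma fkMon_li : LinearIndependent k (fkMon k) := by
  have h : LinearIndependent k (((Lcol k).comp (φrep k).toLinearMap) ∘ fkMon k) := by
    have he : ((Lcol k).comp (φrep k).toLinearMap) ∘ fkMon k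
        = ⇑(Pi.basisFun k (Fin 12)) ∘ widx := by
      funext i
      simpa using Lcol_φrep_fkMon k i
    rw [he]
    exact (Pi.basisFun k (Fin 12)).linearIndependent.comp widx widx_inj
  exact h.of_comp _

end
section Span

variable (k : Type*) [Field k]

local notation "A" => fkx k 0
local notation "B" => fkx k 1
local notation "C" => fkx k 2

lemma fkMon_span_top :
    Submodule.span k (Set.range (fkMon k)) = ⊤ := by
  set S := Submodule.span k (Set.range (fkMon k)) with hSdef
  -- local (FK₃-elaborated) versions of basic algebra lemmas
  have hpow0 : ∀ x : FK3 k, x ^ (0 : ℕ) = 1 := fun x => pow_zero x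
  have hpow1 : ∀ x : FK3 k, x ^ (1 : ℕ) = x := fun x => pow_one x
  have hone : ∀ x : FK3 k, 1 * x = x := fun x => one_mul x
  have hmone : ∀ x : FK3 k, x * 1 = x := fun x => mul_one x
  have hassoc : ∀ x y z : FK3 k, x * y * z = x * (y * z) := fun x y z => mul_assoc x y z
  -- defining relations in FK₃
  have hsq : ∀ i : Fin 3, fkx k i * fkx k i = 0 := by
    intro i
    have h := RingQuot.mkAlgHom_rel k (FKRel.sq (k := k) i)
    rw [map_mul, map_zero] at h
    exact h
  have hAA : A * A = 0 := hsq 0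
  have hBB : B * B = 0 := hsq 1
  have hCC : C * C = 0 := hsq 2
  have h1 : A * B + C * A + B * C = 0 := by
    have h := RingQuot.mkAlgHom_rel k (@FKRel.r1 k _)
    rw [map_add, map_add, map_mul, map_mul, map_mul, map_zero] at h
    exact h
  have h2 : B * A + A * C + C * B = 0 := by
    have h := RingQuot.mkAlgHom_rel k (@FKRel.r2 k _)
    rw [map_add, map_add, map_mul, map_mul, map_mul, map_zero] at h
    exact h
  -- derived rewriting rules, instantiated from the generic ring lemmas
  have hCA : C * A = -(A * B) - B * C := fkg_ca h1
  have hCB : C * B = -(B * A) - A * C := fkg_cb h2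
  have rAAt : ∀ t : FK3 k, A * (A * t) = 0 := fkg_sqt hAA
  have rBBt : ∀ t : FK3 k, B * (B * t) = 0 := fkg_sqt hBB
  have hBAB : B * (A * B) = A * (B * A) := fkg_bab hAA hBB h2
  have rBABt : ∀ t : FK3 k, B * (A * (B * t)) = A * (B * (A * t)) := fkg_babt hAA hBB h2
  have iCab : C * (A * B) = B * (A * C) := fkg_cab hAA hBB hCC h1 h2
  have iCac : C * (A * C) = -(A * (B * C)) := fkg_cac hAA hBB hCC h1 h2
  have iCbc : C * (B * C) = -(B * (A * C)) := fkg_cbc hAA hBB hCC h1 h2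
  have iCba : C * (B * A) = A * (B * C) := fkg_cba hAA hBB hCC h1 h2
  have iCabc : C * (A * (B * C)) = 0 := fkg_cabc hAA hBB hCC h1 h2
  have iCbac : C * (B * (A * C)) = 0 := fkg_cbac hAA hBB hCC h1 h2
  have iCaba : C * (A * (B * A)) = -(A * (B * (A * C))) := fkg_caba hAA hBB hCC h1 h2
  have iCabac : C * (A * (B * (A * C))) = 0 := fkg_cabac hAA hBB hCC h1 h2
  have iBaba : B * (A * (B * A)) = 0 := fkg_baba hAA hBB hCC h1 h2
  have iBabac : B * (A * (B * (A * C))) = 0 := fkg_babac hAA hBB hCC h1 h2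
  have iBabc : B * (A * (B * C)) = A * (B * (A * C)) := fkg_babc hAA hBB hCC h1 h2
  -- membership of the twelve basis monomials
  have mem : ∀ j, fkMon k j ∈ S := fun j => Submodule.subset_span ⟨j, rfl⟩
  have hm0 : (1 : FK3 k) ∈ S := by
    simpa only [fkMon, Fin.isValue, Fin.val_zero, Fin.val_one, hpow0, hpow1, hone, hmone,
      hassoc] using mem (.inl (0, 0, 0))
  have hm1 : A ∈ S := by
    simpa only [fkMon, Fin.isValue, Fin.val_zero, Fin.val_one, hpow0, hpow1, hone, hmone,
      hassoc] using mem (.inl (1, 0, 0))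
  have hm2 : B ∈ S := by
    simpa only [fkMon, Fin.isValue, Fin.val_zero, Fin.val_one, hpow0, hpow1, hone, hmone,
      hassoc] using mem (.inl (0, 1, 0))
  have hm3 : C ∈ S := by
    simpa only [fkMon, Fin.isValue, Fin.val_zero, Fin.val_one, hpow0, hpow1, hone, hmone,
      hassoc] using mem (.inl (0, 0, 1))
  have hm4 : A * B ∈ S := by
    simpa only [fkMon, Fin.isValue, Fin.val_zero, Fin.val_one, hpow0, hpow1, hone, hmone,
      hassoc] using mem (.inl (1, 1, 0))
  have hm5 : A * C ∈ S := by
    simpa only [fkMon, Fin.isValue, Fin.val_zero, Fin.val_one, hpow0, hpow1, hone, hmone,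
      hassoc] using mem (.inl (1, 0, 1))
  have hm6 : B * C ∈ S := by
    simpa only [fkMon, Fin.isValue, Fin.val_zero, Fin.val_one, hpow0, hpow1, hone, hmone,
      hassoc] using mem (.inl (0, 1, 1))
  have hm7 : A * (B * C) ∈ S := by
    simpa only [fkMon, Fin.isValue, Fin.val_zero, Fin.val_one, hpow0, hpow1, hone, hmone,
      hassoc] using mem (.inl (1, 1, 1))
  have hm8 : B * A ∈ S := by
    simpa only [fkMon, Fin.isValue, Fin.val_zero, Fin.val_one, hpow0, hpow1, hone, hmone,
      hassoc] using mem (.inr (0, 0))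
  have hm9 : B * (A * C) ∈ S := by
    simpa only [fkMon, Fin.isValue, Fin.val_zero, Fin.val_one, hpow0, hpow1, hone, hmone,
      hassoc] using mem (.inr (0, 1))
  have hm10 : A * (B * A) ∈ S := by
    simpa only [fkMon, Fin.isValue, Fin.val_zero, Fin.val_one, hpow0, hpow1, hone, hmone,
      hassoc] using mem (.inr (1, 0))
  have hm11 : A * (B * (A * C)) ∈ S := by
    simpa only [fkMon, Fin.isValue, Fin.val_zero, Fin.val_one, hpow0, hpow1, hone, hmone,
      hassoc] using mem (.inr (1, 1))
  -- closure of S under left multiplication by the generators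
  have stepA : ∀ j, A * fkMon k j ∈ S := by
    rintro (⟨n1, n2, n3⟩ | ⟨n1, n3⟩)
    · fin_cases n1 <;> fin_cases n2 <;> fin_cases n3 <;>
        simp only [fkMon, Fin.isValue, Fin.val_zero, Fin.val_one, hpow0, hpow1, hone, hmone,
          hassoc]
      · exact hm1
      · exact hm5
      · exact hm4
      · exact hm7
      · rw [hAA]; exact S.zero_mem
      · rw [rAAt]; exact S.zero_mem
      · rw [rAAt]; exact S.zero_mem
      · rw [rAAt]; exact S.zero_mem
    · fin_cases n1 <;> fin_cases n3 <;>
        simp only [fkMon, Fin.isValue, Fin.val_zero, Fin.val_one, hpow0, hpow1, hone, hmone,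
          hassoc]
      · exact hm10
      · exact hm11
      · rw [rAAt]; exact S.zero_mem
      · rw [rAAt]; exact S.zero_mem
  have stepB : ∀ j, B * fkMon k j ∈ S := by
    rintro (⟨n1, n2, n3⟩ | ⟨n1, n3⟩)
    · fin_cases n1 <;> fin_cases n2 <;> fin_cases n3 <;>
        simp only [fkMon, Fin.isValue, Fin.val_zero, Fin.val_one, hpow0, hpow1, hone, hmone,
          hassoc]
      · exact hm2
      · exact hm6
      · rw [hBB]; exact S.zero_mem
      · rw [rBBt]; exact S.zero_mem
      · exact hm8
      · exact hm9
      · rw [hBAB]; exact hm10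
      · rw [iBabc]; exact hm11
    · fin_cases n1 <;> fin_cases n3 <;>
        simp only [fkMon, Fin.isValue, Fin.val_zero, Fin.val_one, hpow0, hpow1, hone, hmone,
          hassoc]
      · rw [rBBt]; exact S.zero_mem
      · rw [rBBt]; exact S.zero_mem
      · rw [iBaba]; exact S.zero_mem
      · rw [iBabac]; exact S.zero_mem
  have stepC : ∀ j, C * fkMon k j ∈ S := by
    rintro (⟨n1, n2, n3⟩ | ⟨n1, n3⟩)
    · fin_cases n1 <;> fin_cases n2 <;> fin_cases n3 <;>
        simp only [fkMon, Fin.isValue, Fin.val_zero, Fin.val_one, hpow0, hpow1, hone, hmone,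
          hassoc]
      · exact hm3
      · rw [hCC]; exact S.zero_mem
      · rw [hCB]; exact S.sub_mem (S.neg_mem hm8) hm5
      · rw [iCbc]; exact S.neg_mem hm9
      · rw [hCA]; exact S.sub_mem (S.neg_mem hm4) hm6
      · rw [iCac]; exact S.neg_mem hm7
      · rw [iCab]; exact hm9
      · rw [iCabc]; exact S.zero_mem
    · fin_cases n1 <;> fin_cases n3 <;>
        simp only [fkMon, Fin.isValue, Fin.val_zero, Fin.val_one, hpow0, hpow1, hone, hmone,
          hassoc]
      · rw [iCba]; exact hm7
      · rw [iCbac]; exact S.zero_mem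
      · rw [iCaba]; exact S.neg_mem hm11
      · rw [iCabac]; exact S.zero_mem
  have hgen : ∀ i : Fin 3, ∀ s ∈ S, fkx k i * s ∈ S := by
    have hmul0 : ∀ x : FK3 k, x * 0 = 0 := fun x => mul_zero x
    have hmuladd : ∀ x y z : FK3 k, x * (y + z) = x * y + x * z := fun x y z => mul_add x y z
    have hmulsmul : ∀ (a : k) (x y : FK3 k), y * (a • x) = a • (y * x) := fun a x y =>
      mul_smul_comm a y x
    intro i s hs
    induction hs using Submodule.span_induction with
    | mem x hx =>
        obtain ⟨j, rfl⟩ := hx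
        fin_cases i
        · exact stepA j
        · exact stepB j
        · exact stepC j
    | zero => rw [hmul0]; exact S.zero_mem
    | add x y hx hy ihx ihy => rw [hmuladd]; exact S.add_mem ihx ihy
    | smul a x hx ih => rw [hmulsmul]; exact S.smul_mem a ih
  have hmul : ∀ a : FK3 k, ∀ s ∈ S, a * s ∈ S := by
    have hsmul : ∀ (r : k) (x : FK3 k), r • x = algebraMap k (FK3 k) r * x := fun r x =>
      Algebra.smul_def r x
    have haddmul : ∀ x y z : FK3 k, (x + y) * z = x * z + y * z := fun x y z => add_mul x y z
    intro a
    obtain ⟨y, rfl⟩ := RingQuot.mkAlgHom_surjective k (FKRel k) a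
    induction y using FreeAlgebra.induction with
    | grade0 r =>
        intro s hs
        rw [AlgHom.commutes, ← hsmul]
        exact S.smul_mem r hs
    | grade1 i => intro s hs; exact hgen i s hs
    | mul y z ihy ihz =>
        intro s hs
        rw [map_mul, hassoc]
        exact ihy _ (ihz s hs)
    | add y z ihy ihz =>
        intro s hs
        rw [map_add, haddmul]
        exact S.add_mem (ihy s hs) (ihz s hs)
  rw [eq_top_iff]
  intro a _
  have h := hmul a 1 hm0
  rwa [hmone] at h
end Span
/-- `dim_k FK₃ = 12`, with basis the monomials
`x₁^{n₁} x₂^{n₂} x₃^{n₃}` (`n_i ∈ {0,1}`) and `x₁^{n₁} (x₂x₁) x₃^{n₃}`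
(`n₁, n₃ ∈ {0,1}`). -/
theorem FK3_dim_and_basis (k : Type*) [Field k] [CharZero k] :
    Module.finrank k (FK3 k) = 12 ∧
    ∃ b : Module.Basis ((Fin 2 × Fin 2 × Fin 2) ⊕ (Fin 2 × Fin 2)) k (FK3 k),
      (∀ p : Fin 2 × Fin 2 × Fin 2,
          b (Sum.inl p)
            = fkx k 0 ^ (p.1 : ℕ) * fkx k 1 ^ (p.2.1 : ℕ) * fkx k 2 ^ (p.2.2 : ℕ)) ∧
      (∀ p : Fin 2 × Fin 2,
          b (Sum.inr p)
            = fkx k 0 ^ (p.1 : ℕ) * (fkx k 1 * fkx k 0) * fkx k 2 ^ (p.2 : ℕ)) := by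
  have hsp : ⊤ ≤ Submodule.span k (Set.range (fkMon k)) := le_of_eq (fkMon_span_top k).symm
  refine ⟨?_, Module.Basis.mk (fkMon_li k) hsp, fun p => ?_, fun p => ?_⟩
  · rw [Module.finrank_eq_card_basis (Module.Basis.mk (fkMon_li k) hsp)]
    rfl
  · rw [Module.Basis.mk_apply]
    rfl
  · rw [Module.Basis.mk_apply]
    rfl
end

section
/- Let ω ∈ k be a primitive third root of unity and q₁, q₂ ∈ k^× with q₁q₂ = −ω. In the 5-dimensional braided vector space HV₁ with basis x₁,x₂,x₃,x₄ and braiding c(x_i⊗x_j) = −x_{2i−j}⊗x_i, c(x_i⊗x₄) = q₁ x₄⊗x_i, c(x₄⊗x_i) = q₂ x_i⊗x₄ (i,j ∈ {1,2,3}), c(x₄⊗x₄) = −ω² x₄⊗x₄, the map c satisfies the braid equation. -/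
/-- The rack underlying HV₁: basis `x₁, x₂, x₃` indexed by `some i`, `i : ZMod 3`
(with `i ▷ j = 2i − j`), and `x₄` indexed by `none` (a fixed point). -/
def hvOp : Option (ZMod 3) → Option (ZMod 3) → Option (ZMod 3)
  | some i, some j => some (2 * i - j)
  | some _, none => none
  | none, b => b

/-- The cocycle of HV₁: `c(x_i⊗x_j) = −x_{2i−j}⊗x_i`, `c(x_i⊗x₄) = q₁ x₄⊗x_i`,
`c(x₄⊗x_i) = q₂ x_i⊗x₄`, `c(x₄⊗x₄) = −ω² x₄⊗x₄`. -/
def hvCoef (k : Type*) [Field k] (ω q1 q2 : k) :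
    Option (ZMod 3) → Option (ZMod 3) → k
  | some _, some _ => -1
  | some _, none => q1
  | none, some _ => q2
  | none, none => -ω ^ 2

lemma braidOuter_single {k : Type*} [Field k] {X : Type*}
    (q : X → X → k) (op : X → X → X) (t : X × X × X) (r : k) :
    braidOuter k q op (Finsupp.single t r)
      = (r * q t.1 t.2.1) • Finsupp.single (op t.1 t.2.1, t.1, t.2.2) (1 : k) := by
  simp [braidOuter, mul_comm, smul_smul]

lemma braidInner_single {k : Type*} [Field k] {X : Type*}
    (q : X → X → k) (op : X → X → X) (t : X × X × X) (r : k) :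
    braidInner k q op (Finsupp.single t r)
      = (r * q t.2.1 t.2.2) • Finsupp.single (t.1, op t.2.1 t.2.2, t.2.1) (1 : k) := by
  simp [braidInner, mul_comm, smul_smul]

/-- the 5-dimensional braided vector space HV₁ (with ω a primitive
third root of unity and `q₁q₂ = −ω`) satisfies the braid equation. -/
theorem HV1_braid_equation {k : Type*} [Field k] (ω q1 q2 : k)
    (hω : ω ^ 3 = 1) (hω1 : ω ≠ 1) (hq : q1 * q2 = -ω) :
    (braidOuter k (hvCoef k ω q1 q2) hvOp)
        ∘ₗ (braidInner k (hvCoef k ω q1 q2) hvOp)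
        ∘ₗ (braidOuter k (hvCoef k ω q1 q2) hvOp)
      = (braidInner k (hvCoef k ω q1 q2) hvOp)
        ∘ₗ (braidOuter k (hvCoef k ω q1 q2) hvOp)
        ∘ₗ (braidInner k (hvCoef k ω q1 q2) hvOp) := by
  refine Finsupp.lhom_ext fun t r => ?_
  obtain ⟨a, b, c⟩ := t
  have key : ∀ i j l : ZMod 3, 2*(2*i-j)-(2*i-l) = 2*i-(2*j-l) := by intros; ring
  rcases a with _ | i <;> rcases b with _ | j <;> rcases c with _ | l <;>
    simp only [LinearMap.comp_apply, braidOuter_single, braidInner_single,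
      LinearMap.map_smul, smul_smul, hvOp, hvCoef, key] <;>
    congr 1 <;> ring
end

section
/- In T(HV₁), the element r_h := x₄ z_h − q₂ z_h x₄ is primitive for each h ∈ {1,2,3}: Δ(r_h) = r_h ⊗ 1 + 1 ⊗ r_h. -/
open FreeAlgebra

/-- `z_h = x_h x₄ − q₁ x₄ x_h` in the tensor algebra `T(HV₁)`, realized as the
free algebra on generators `x_i = ι (some i)` (`i : ZMod 3`) and `x₄ = ι none`. -/
def zT (k : Type*) [Field k] (q1 : k) (h : ZMod 3) :
    FreeAlgebra k (Option (ZMod 3)) :=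
  ι k (some h) * ι k none - q1 • (ι k (none : Option (ZMod 3)) * ι k (some h))

/-- in `T(HV₁)`, the element `r_h = x₄ z_h − q₂ z_h x₄` is
primitive: `Δ(r_h) = r_h ⊗ 1 + 1 ⊗ r_h` for `h ∈ {1,2,3}`.  The braided tensor
square is modelled as in Statement 17. -/
theorem rh_primitive {k : Type*} [Field k] (ω q1 q2 : k)
    (hω : ω ^ 3 = 1) (hω1 : ω ≠ 1) (hq : q1 * q2 = -ω)
    {B : Type*} [Ring B] [Algebra k B]
    (l r : FreeAlgebra k (Option (ZMod 3)) →ₐ[k] B)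
    (hc1 : ∀ i j : ZMod 3, r (ι k (some i)) * l (ι k (some j))
        = -(l (ι k (some (2 * i - j))) * r (ι k (some i))))
    (hc2 : ∀ i : ZMod 3, r (ι k (some i)) * l (ι k (none : Option (ZMod 3)))
        = q1 • (l (ι k (none : Option (ZMod 3))) * r (ι k (some i))))
    (hc3 : ∀ i : ZMod 3, r (ι k (none : Option (ZMod 3))) * l (ι k (some i))
        = q2 • (l (ι k (some i)) * r (ι k (none : Option (ZMod 3)))))
    (hc4 : r (ι k (none : Option (ZMod 3))) * l (ι k (none : Option (ZMod 3)))
        = (-ω ^ 2) • (l (ι k (none : Option (ZMod 3))) * r (ι k (none : Option (ZMod 3)))))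
    (Δ : FreeAlgebra k (Option (ZMod 3)) →ₐ[k] B)
    (hΔ : ∀ i : Option (ZMod 3), Δ (ι k i) = l (ι k i) + r (ι k i)) :
    ∀ h : ZMod 3,
      Δ (ι k (none : Option (ZMod 3)) * zT k q1 h - q2 • (zT k q1 h * ι k (none : Option (ZMod 3))))
        = l (ι k (none : Option (ZMod 3)) * zT k q1 h - q2 • (zT k q1 h * ι k (none : Option (ZMod 3))))
          + r (ι k (none : Option (ZMod 3)) * zT k q1 h - q2 • (zT k q1 h * ι k (none : Option (ZMod 3)))) := by
  intro h
  have hω2 : ω ^ 2 = -1 - ω := by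
    have h3 : (ω - 1) * (ω ^ 2 + ω + 1) = 0 := by ring_nf; linear_combination hω
    rcases mul_eq_zero.mp h3 with h' | h'
    · exact absurd (sub_eq_zero.mp h') hω1
    · linear_combination h'
  set x := l (ι k (none : Option (ZMod 3))) with hx
  set y := l (ι k (some h)) with hy
  set X := r (ι k (none : Option (ZMod 3))) with hX
  set Y := r (ι k (some h)) with hY
  have e1 : Y * y = -(y * Y) := by
    have := hc1 h h
    have eh : (2 * h - h : ZMod 3) = h := by ring
    rw [eh] at this
    exact this
  have e2 : Y * x = q1 • (x * Y) := hc2 h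
  have e3 : X * y = q2 • (y * X) := hc3 h
  have e4 : X * x = (-ω ^ 2) • (x * X) := hc4
  have e1' : ∀ t : B, Y * (y * t) = -(y * (Y * t)) := fun t => by
    rw [← mul_assoc, e1, neg_mul, mul_assoc]
  have e2' : ∀ t : B, Y * (x * t) = q1 • (x * (Y * t)) := fun t => by
    rw [← mul_assoc, e2, smul_mul_assoc, mul_assoc]
  have e3' : ∀ t : B, X * (y * t) = q2 • (y * (X * t)) := fun t => by
    rw [← mul_assoc, e3, smul_mul_assoc, mul_assoc]
  have e4' : ∀ t : B, X * (x * t) = (-ω ^ 2) • (x * (X * t)) := fun t => by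
    rw [← mul_assoc, e4, smul_mul_assoc, mul_assoc]
  simp only [zT, map_sub, map_mul, map_smul, hΔ, ← hx, ← hy, ← hX, ← hY]
  simp only [mul_add, add_mul, mul_sub, sub_mul, smul_add, smul_sub, mul_assoc,
    mul_smul_comm, smul_mul_assoc, smul_smul]
  simp only [e1, e2, e3, e4, e1', e2', e3', e4', mul_smul_comm, smul_smul,
    mul_neg, neg_mul, mul_assoc, smul_neg, neg_neg]
  match_scalars <;>
    first
      | ring1
      | linear_combination (-q2 * ω ^ 2) * hq + q2 * hω
      | linear_combination (-q1 * ω ^ 2) * hq + q1 * hω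
      | linear_combination ω ^ 2 * hq - hω
end
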